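/- Hoeffding's Inequality: if X_1, …, X_n are i.i.d. real-valued random variables on a probability space (Ω, μ) taking values in the interval [a,b] almost surely (with a < b), and S_n = X_1 + ⋯ + X_n, then for every ε > 0, μ({ω : |S_n(ω) − E[S_n]|/n ≥ ε}) ≤ 2·exp(−2nε²/(b−a)²). -/

import Mathlib

open MeasureTheory ProbabilityTheory Filter

lemma hoeff_D_pos {p : ℝ} (hp0 : 0 ≤ p) (hp1 : p ≤ 1) (x : ℝ) :
    0 < 1 - p + p * Real.exp x := by
  rcases le_total (Real.exp x) 1 with h | h
  · nlinarith [Real.exp_pos x, mul_nonneg (by linarith : (0:ℝ) ≤ 1 - Real.exp x)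
      (by linarith : (0:ℝ) ≤ 1 - p)]
  · nlinarith [Real.exp_pos x, mul_nonneg hp0 (by linarith : (0:ℝ) ≤ Real.exp x - 1)]

lemma hoeff_analytic {p : ℝ} (hp0 : 0 ≤ p) (hp1 : p ≤ 1) (u : ℝ) :
    -p * u + Real.log (1 - p + p * Real.exp u) ≤ u ^ 2 / 8 := by
  have hD := hoeff_D_pos hp0 hp1
  set g : ℝ → ℝ := fun x => -p * x + Real.log (1 - p + p * Real.exp x) - x ^ 2 / 8 with hg
  set g' : ℝ → ℝ := fun x => -p + p * Real.exp x / (1 - p + p * Real.exp x) - x / 4 with hg'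
  have hDd : ∀ x, HasDerivAt (fun u => 1 - p + p * Real.exp u) (p * Real.exp x) x := by
    intro x
    exact ((Real.hasDerivAt_exp x).const_mul p).const_add (1 - p)
  have hgderiv : ∀ x, HasDerivAt g (g' x) x := by
    intro x
    have h1 : HasDerivAt (fun u : ℝ => -p * u) (-p) x := by
      simpa using (hasDerivAt_id x).const_mul (-p)
    have h2 : HasDerivAt (fun u => Real.log (1 - p + p * Real.exp u))
        (p * Real.exp x / (1 - p + p * Real.exp x)) x := (hDd x).log (hD x).ne'
    have h3 : HasDerivAt (fun u : ℝ => u ^ 2 / 8) (x / 4) x := by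
      have := (hasDerivAt_pow 2 x).div_const 8
      refine this.congr_deriv ?_
      norm_num
      ring
    exact ((h1.add h2).sub h3)
  have hg'deriv : ∀ x, HasDerivAt g'
      ((1 - p) * (p * Real.exp x) / (1 - p + p * Real.exp x) ^ 2 - 1 / 4) x := by
    intro x
    have h1 : HasDerivAt (fun u => p * Real.exp u / (1 - p + p * Real.exp u))
        ((1 - p) * (p * Real.exp x) / (1 - p + p * Real.exp x) ^ 2) x := by
      have := ((Real.hasDerivAt_exp x).const_mul p).div (hDd x) (hD x).ne'
      refine this.congr_deriv ?_
      ring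
    have h2 : HasDerivAt (fun u : ℝ => u / 4) (1 / 4 : ℝ) x := by
      simpa using (hasDerivAt_id x).div_const 4
    exact ((h1.const_add (-p)).sub h2)
  have hbound : ∀ x, (1 - p) * (p * Real.exp x) / (1 - p + p * Real.exp x) ^ 2 - 1 / 4 ≤ 0 := by
    intro x
    have h := hD x
    rw [sub_nonpos, div_le_iff₀ (by positivity)]
    nlinarith [sq_nonneg ((1 - p) - p * Real.exp x), Real.exp_pos x]
  have hanti : Antitone g' := by
    refine antitone_of_deriv_nonpos (fun x => (hg'deriv x).differentiableAt) fun x => ?_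
    rw [(hg'deriv x).deriv]
    exact hbound x
  have hg'0 : g' 0 = 0 := by
    have h : 1 - p + p * Real.exp 0 = 1 := by simp
    simp only [hg', h, Real.exp_zero, mul_one]
    field_simp
    ring
  have hg0 : g 0 = 0 := by
    simp [hg]
  have key : g u ≤ 0 := by
    rcases le_total 0 u with hu | hu
    · have hA : AntitoneOn g (Set.Ici (0:ℝ)) := by
        refine antitoneOn_of_deriv_nonpos (convex_Ici 0)
          (fun x _ => ((hgderiv x).differentiableAt).continuousAt.continuousWithinAt)
          (fun x _ => ((hgderiv x).differentiableAt).differentiableWithinAt)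
          (fun x hx => ?_)
        rw [(hgderiv x).deriv]
        have : x ∈ Set.Ici (0:ℝ) := interior_subset hx
        calc g' x ≤ g' 0 := hanti this
          _ = 0 := hg'0
      calc g u ≤ g 0 := hA (Set.self_mem_Ici) hu hu
        _ = 0 := hg0
    · have hM : MonotoneOn g (Set.Iic (0:ℝ)) := by
        refine monotoneOn_of_deriv_nonneg (convex_Iic 0)
          (fun x _ => ((hgderiv x).differentiableAt).continuousAt.continuousWithinAt)
          (fun x _ => ((hgderiv x).differentiableAt).differentiableWithinAt)
          (fun x hx => ?_)
        rw [(hgderiv x).deriv]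
        have hx' : x ≤ 0 := le_of_lt (by simpa using hx)
        calc (0:ℝ) = g' 0 := hg'0.symm
          _ ≤ g' x := hanti hx'
      calc g u ≤ g 0 := hM hu Set.self_mem_Iic hu
        _ = 0 := hg0
  have := key
  simp only [hg] at this
  linarith

lemma integrable_of_ae_bdd {Ω : Type*} [MeasurableSpace Ω] {μ : Measure Ω}
    [IsFiniteMeasure μ] {f : Ω → ℝ} (hf : Measurable f) {C : ℝ}
    (h : ∀ᵐ ω ∂μ, |f ω| ≤ C) : Integrable f μ :=
  Integrable.mono' (integrable_const C) hf.aestronglyMeasurable h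

lemma hoeff_mgf {Ω : Type*} [MeasurableSpace Ω] {μ : Measure Ω} [IsProbabilityMeasure μ]
    {Y : Ω → ℝ} (hY : Measurable Y) {a b : ℝ} (hab : a < b)
    (hbdd : ∀ᵐ ω ∂μ, Y ω ∈ Set.Icc a b) (hmean : ∫ ω, Y ω ∂μ = 0) (t : ℝ) :
    mgf Y μ t ≤ Real.exp (t ^ 2 * (b - a) ^ 2 / 8) := by
  have hba : (0:ℝ) < b - a := sub_pos.2 hab
  have hYint : Integrable Y μ := by
    refine integrable_of_ae_bdd hY (C := max |a| |b|) ?_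
    filter_upwards [hbdd] with ω hω
    exact abs_le_max_abs_abs hω.1 hω.2
  have ha0 : a ≤ 0 := by
    have h1 : ∫ ω, (a : ℝ) ∂μ ≤ ∫ ω, Y ω ∂μ :=
      integral_mono_ae (integrable_const a) hYint (hbdd.mono fun ω hω => hω.1)
    simpa [hmean] using h1
  have hb0 : 0 ≤ b := by
    have h1 : ∫ ω, Y ω ∂μ ≤ ∫ ω, (b : ℝ) ∂μ :=
      integral_mono_ae hYint (integrable_const b) (hbdd.mono fun ω hω => hω.2)
    simpa [hmean] using h1
  set p : ℝ := -a / (b - a) with hp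
  have hp0 : 0 ≤ p := div_nonneg (by linarith) hba.le
  have hp1 : p ≤ 1 := by
    rw [hp, div_le_one hba]
    linarith
  set c₁ : ℝ := (b * Real.exp (t * a) - a * Real.exp (t * b)) / (b - a) with hc₁
  set c₂ : ℝ := (Real.exp (t * b) - Real.exp (t * a)) / (b - a) with hc₂
  -- pointwise convexity bound
  have hpt : ∀ᵐ ω ∂μ, Real.exp (t * Y ω) ≤ c₁ + c₂ * Y ω := by
    filter_upwards [hbdd] with ω hω
    set y := Y ω
    have hl1 : (0:ℝ) ≤ (b - y) / (b - a) := div_nonneg (by linarith [hω.2]) hba.le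
    have hl2 : (0:ℝ) ≤ (y - a) / (b - a) := div_nonneg (by linarith [hω.1]) hba.le
    have hsum : (b - y) / (b - a) + (y - a) / (b - a) = 1 := by field_simp; ring
    have hcomb : ((b - y) / (b - a)) • (t * a) + ((y - a) / (b - a)) • (t * b) = t * y := by
      simp only [smul_eq_mul]
      rw [div_mul_eq_mul_div, div_mul_eq_mul_div, ← add_div, div_eq_iff hba.ne']
      ring
    have hconv := convexOn_exp.2 (Set.mem_univ (t * a)) (Set.mem_univ (t * b)) hl1 hl2 hsum
    rw [hcomb] at hconv
    refine hconv.trans (le_of_eq ?_)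
    simp only [smul_eq_mul, hc₁, hc₂]
    ring
  -- integrate
  have hintL : Integrable (fun ω => Real.exp (t * Y ω)) μ := by
    refine integrable_of_ae_bdd ((hY.const_mul t).exp) (C := Real.exp (|t| * max |a| |b|)) ?_
    filter_upwards [hbdd] with ω hω
    rw [abs_of_pos (Real.exp_pos _)]
    apply Real.exp_le_exp.2
    calc t * Y ω ≤ |t * Y ω| := le_abs_self _
      _ = |t| * |Y ω| := abs_mul _ _
      _ ≤ |t| * max |a| |b| := by
          exact mul_le_mul_of_nonneg_left (abs_le_max_abs_abs hω.1 hω.2) (abs_nonneg t)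
  have hintR : Integrable (fun ω => c₁ + c₂ * Y ω) μ :=
    (integrable_const c₁).add (hYint.const_mul c₂)
  have hmgf : mgf Y μ t ≤ c₁ := by
    have h1 : mgf Y μ t ≤ ∫ ω, (c₁ + c₂ * Y ω) ∂μ :=
      integral_mono_ae hintL hintR hpt
    rwa [integral_add (integrable_const c₁) (hYint.const_mul c₂), integral_const,
      integral_const_mul, hmean, mul_zero, add_zero, probReal_univ,
      one_smul] at h1
  -- identify c₁ with exp (φ u)
  set u : ℝ := t * (b - a) with hu
  have h1 : -p * u = t * a := by
    rw [hp, hu]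
    field_simp
  have hc₁eq : c₁ = Real.exp (-p * u + Real.log (1 - p + p * Real.exp u)) := by
    rw [Real.exp_add, Real.exp_log (by
      rcases le_total (Real.exp u) 1 with h | h
      · nlinarith [Real.exp_pos u, mul_nonneg (by linarith : (0:ℝ) ≤ 1 - Real.exp u)
          (by linarith : (0:ℝ) ≤ 1 - p)]
      · nlinarith [Real.exp_pos u, mul_nonneg hp0 (by linarith : (0:ℝ) ≤ Real.exp u - 1)]), h1]
    have h2 : Real.exp (t * a) * Real.exp u = Real.exp (t * b) := by
      rw [← Real.exp_add]
      congr 1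
      rw [hu]; ring
    have h3 : Real.exp (t * a) * (1 - p + p * Real.exp u)
        = (1 - p) * Real.exp (t * a) + p * (Real.exp (t * a) * Real.exp u) := by ring
    rw [h3, h2, hc₁, hp]
    field_simp
    ring
  calc mgf Y μ t ≤ c₁ := hmgf
    _ = Real.exp (-p * u + Real.log (1 - p + p * Real.exp u)) := hc₁eq
    _ ≤ Real.exp (u ^ 2 / 8) := Real.exp_le_exp.2 (hoeff_analytic hp0 hp1 u)
    _ = Real.exp (t ^ 2 * (b - a) ^ 2 / 8) := by rw [hu]; ring_nf

lemma hoeff_one_sided {Ω : Type*} [MeasurableSpace Ω] (μ : Measure Ω) [IsProbabilityMeasure μ]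
    (n : ℕ) (X : Fin n → Ω → ℝ) (a b : ℝ) (hab : a < b)
    (hmeas : ∀ i, Measurable (X i))
    (hindep : iIndepFun X μ)
    (hbdd : ∀ i, ∀ᵐ ω ∂μ, X i ω ∈ Set.Icc a b) (ε : ℝ) (hε : 0 < ε) :
    (μ {ω | (n : ℝ) * ε ≤ (∑ i, X i ω) - ∫ ω', (∑ i, X i ω') ∂μ}).toReal
      ≤ Real.exp (-2 * n * ε ^ 2 / (b - a) ^ 2) := by
  have hba : (0:ℝ) < b - a := sub_pos.2 hab
  have hXint : ∀ i, Integrable (X i) μ := by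
    intro i
    refine integrable_of_ae_bdd (hmeas i) (C := max |a| |b|) ?_
    filter_upwards [hbdd i] with ω hω
    exact abs_le_max_abs_abs hω.1 hω.2
  set m : Fin n → ℝ := fun i => ∫ ω, X i ω ∂μ with hm
  have hmmem : ∀ i, m i ∈ Set.Icc a b := by
    intro i
    constructor
    · have h1 : ∫ ω, (a : ℝ) ∂μ ≤ ∫ ω, X i ω ∂μ :=
        integral_mono_ae (integrable_const a) (hXint i) ((hbdd i).mono fun ω hω => hω.1)
      simpa using h1
    · have h1 : ∫ ω, X i ω ∂μ ≤ ∫ ω, (b : ℝ) ∂μ :=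
        integral_mono_ae (hXint i) (integrable_const b) ((hbdd i).mono fun ω hω => hω.2)
      simpa using h1
  set Y : Fin n → Ω → ℝ := fun i => (fun x => x - m i) ∘ X i with hY
  have hYmeas : ∀ i, Measurable (Y i) := fun i => (hmeas i).sub measurable_const
  have hYindep : iIndepFun Y μ :=
    hindep.comp (fun i x => x - m i) (fun i => measurable_id.sub measurable_const)
  have hYbdd : ∀ i, ∀ᵐ ω ∂μ, Y i ω ∈ Set.Icc (a - m i) (b - m i) := by
    intro i
    filter_upwards [hbdd i] with ω hω
    exact ⟨sub_le_sub_right hω.1 _, sub_le_sub_right hω.2 _⟩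
  have hYabs : ∀ i, ∀ᵐ ω ∂μ, |Y i ω| ≤ b - a := by
    intro i
    filter_upwards [hbdd i] with ω hω
    have h1 := (hmmem i).1
    have h2 := (hmmem i).2
    rw [abs_le]
    constructor <;> simp only [hY, Function.comp_apply] <;> [linarith [hω.1]; linarith [hω.2]]
  have hYmean : ∀ i, ∫ ω, Y i ω ∂μ = 0 := by
    intro i
    simp only [hY, Function.comp_apply]
    rw [integral_sub (hXint i) (integrable_const (m i)), integral_const]
    simp [hm]
  set Z : Ω → ℝ := ∑ i, Y i with hZ
  have hZapp : ∀ ω, Z ω = (∑ i, X i ω) - ∫ ω', (∑ i, X i ω') ∂μ := by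
    intro ω
    have hint : ∫ ω', (∑ i, X i ω') ∂μ = ∑ i, m i := by
      rw [integral_finset_sum _ (fun i _ => hXint i)]
    rw [hZ, hint]
    simp only [Finset.sum_apply, hY, Function.comp_apply]
    rw [Finset.sum_sub_distrib]
  have hZmeas : Measurable Z := by
    have h := Finset.measurable_sum (f := Y) Finset.univ (fun i _ => hYmeas i)
    have h2 : Z = fun ω => ∑ i, Y i ω := by ext ω; rw [hZ]; simp [Finset.sum_apply]
    rw [h2]; exact h
  set t : ℝ := 4 * ε / (b - a) ^ 2 with ht
  have ht0 : 0 ≤ t := by positivity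
  have hZbdd : ∀ᵐ ω ∂μ, |Z ω| ≤ n * (b - a) := by
    filter_upwards [MeasureTheory.ae_all_iff.2 hYabs] with ω hω
    calc |Z ω| = |∑ i, Y i ω| := by rw [hZ]; simp [Finset.sum_apply]
      _ ≤ ∑ i, |Y i ω| := Finset.abs_sum_le_sum_abs _ _
      _ ≤ ∑ _i : Fin n, (b - a) := Finset.sum_le_sum (fun i _ => hω i)
      _ = n * (b - a) := by simp [Finset.sum_const, nsmul_eq_mul]; ring
  have hintZ : Integrable (fun ω => Real.exp (t * Z ω)) μ := by
    refine integrable_of_ae_bdd ((hZmeas.const_mul t).exp) (C := Real.exp (t * (n * (b - a)))) ?_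
    filter_upwards [hZbdd] with ω hω
    rw [abs_of_pos (Real.exp_pos _)]
    refine Real.exp_le_exp.2 ?_
    calc t * Z ω ≤ t * |Z ω| := mul_le_mul_of_nonneg_left (le_abs_self _) ht0
      _ ≤ t * (n * (b - a)) := mul_le_mul_of_nonneg_left hω ht0
  have h1 := measure_ge_le_exp_mul_mgf (μ := μ) (X := Z) (t := t) ((n : ℝ) * ε) ht0 hintZ
  have hprod : mgf Z μ t = ∏ i, mgf (Y i) μ t := hYindep.mgf_sum hYmeas Finset.univ
  have hbound : ∏ i, mgf (Y i) μ t ≤ Real.exp (t ^ 2 * (b - a) ^ 2 / 8) ^ n := by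
    calc ∏ i, mgf (Y i) μ t ≤ ∏ _i : Fin n, Real.exp (t ^ 2 * (b - a) ^ 2 / 8) := by
          refine Finset.prod_le_prod (fun i _ => mgf_nonneg) (fun i _ => ?_)
          have h2 := hoeff_mgf (hYmeas i)
            (show a - m i < b - m i by linarith) (hYbdd i) (hYmean i) t
          have h3 : b - m i - (a - m i) = b - a := by ring
          rwa [h3] at h2
      _ = Real.exp (t ^ 2 * (b - a) ^ 2 / 8) ^ n := by simp [Finset.prod_const]
  have hsets : {ω | (n : ℝ) * ε ≤ (∑ i, X i ω) - ∫ ω', (∑ i, X i ω') ∂μ}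
      = {ω | (n : ℝ) * ε ≤ Z ω} := Set.ext fun ω => by simp only [Set.mem_setOf_eq, ← hZapp ω]
  rw [hsets]
  calc (μ {ω | (n : ℝ) * ε ≤ Z ω}).toReal
      ≤ Real.exp (-t * ((n : ℝ) * ε)) * mgf Z μ t := h1
    _ ≤ Real.exp (-t * ((n : ℝ) * ε)) * Real.exp (t ^ 2 * (b - a) ^ 2 / 8) ^ n := by
        rw [hprod]
        exact mul_le_mul_of_nonneg_left hbound (Real.exp_pos _).le
    _ = Real.exp (-2 * n * ε ^ 2 / (b - a) ^ 2) := by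
        rw [← Real.exp_nat_mul, ← Real.exp_add]
        congr 1
        rw [ht]
        field_simp
        ring

/-- Hoeffding's Inequality: if `X 1, …, X n` are i.i.d. real-valued random variables on a
probability space `(Ω, μ)` taking values in `[a, b]` almost surely (with `a < b`), and
`S n = X 1 + ⋯ + X n`, then for every `ε > 0`,
`μ {ω | |S n ω − E[S n]| / n ≥ ε} ≤ 2 exp(−2 n ε² / (b − a)²)`. -/
theorem hoeffding_inequality
    {Ω : Type*} [MeasurableSpace Ω] (μ : Measure Ω) [IsProbabilityMeasure μ]
    (n : ℕ) (X : Fin n → Ω → ℝ) (a b : ℝ) (hab : a < b)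
    (hmeas : ∀ i, Measurable (X i))
    (hindep : iIndepFun X μ)
    (hident : ∀ i j, IdentDistrib (X i) (X j) μ μ)
    (hbdd : ∀ i, ∀ᵐ ω ∂μ, X i ω ∈ Set.Icc a b)
    (ε : ℝ) (hε : 0 < ε) :
    μ {ω | ε ≤ |(∑ i, X i ω) - ∫ ω', (∑ i, X i ω') ∂μ| / n}
      ≤ ENNReal.ofReal (2 * Real.exp (-2 * n * ε ^ 2 / (b - a) ^ 2)) := by
  rcases Nat.eq_zero_or_pos n with rfl | hn
  · have hempty : {ω : Ω | ε ≤ |(∑ i : Fin 0, X i ω) - ∫ ω', (∑ i : Fin 0, X i ω') ∂μ| / (0:ℕ)}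
        = ∅ := by
      ext ω
      simp [not_le.2 hε]
    rw [hempty]
    simp
  have hn' : (0:ℝ) < n := by exact_mod_cast hn
  set S : Ω → ℝ := fun ω => ∑ i, X i ω with hS
  set ES : ℝ := ∫ ω', (∑ i, X i ω') ∂μ with hES
  set r : ℝ := Real.exp (-2 * n * ε ^ 2 / (b - a) ^ 2) with hr
  set A : Set Ω := {ω | (n : ℝ) * ε ≤ S ω - ES} with hA_def
  set B : Set Ω := {ω | (n : ℝ) * ε ≤ -(S ω - ES)} with hB_def
  have hsub : {ω | ε ≤ |S ω - ES| / n} ⊆ A ∪ B := by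
    intro ω hω
    rw [Set.mem_setOf_eq, le_div_iff₀ hn'] at hω
    rw [mul_comm] at hω
    rcases le_abs.1 hω with h | h
    · exact Or.inl h
    · exact Or.inr h
  have hA : μ A ≤ ENNReal.ofReal r := by
    rw [← ENNReal.ofReal_toReal (measure_ne_top μ A)]
    exact ENNReal.ofReal_le_ofReal
      (hoeff_one_sided μ n X a b hab hmeas hindep hbdd ε hε)
  have hB : μ B ≤ ENNReal.ofReal r := by
    have hmeas' : ∀ i, Measurable (fun ω => -X i ω) := fun i => (hmeas i).neg
    have hindep' : iIndepFun (fun i => fun ω => -X i ω) μ :=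
      hindep.comp (fun _ => Neg.neg) (fun _ => measurable_neg)
    have hbdd' : ∀ i, ∀ᵐ ω ∂μ, (fun ω => -X i ω) ω ∈ Set.Icc (-b) (-a) := by
      intro i
      filter_upwards [hbdd i] with ω hω
      exact ⟨neg_le_neg hω.2, neg_le_neg hω.1⟩
    have h := hoeff_one_sided μ n (fun i => fun ω => -X i ω) (-b) (-a)
      (by linarith) hmeas' hindep' hbdd' ε hε
    have hseteq : {ω | (n : ℝ) * ε ≤ (∑ i, -X i ω) - ∫ ω', (∑ i, -X i ω') ∂μ} = B := by
      ext ω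
      simp only [Set.mem_setOf_eq, hB_def, hS, hES, Finset.sum_neg_distrib, integral_neg]
      constructor <;> intro h' <;> linarith
    rw [hseteq] at h
    have hexp : Real.exp (-2 * n * ε ^ 2 / (-a - -b) ^ 2) = r := by
      rw [hr, show (-a - -b : ℝ) = b - a by ring]
    rw [hexp] at h
    rw [← ENNReal.ofReal_toReal (measure_ne_top μ B)]
    exact ENNReal.ofReal_le_ofReal h
  calc μ {ω | ε ≤ |S ω - ES| / n} ≤ μ (A ∪ B) := measure_mono hsub
    _ ≤ μ A + μ B := measure_union_le _ _
    _ ≤ ENNReal.ofReal r + ENNReal.ofReal r := add_le_add hA hB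
    _ = ENNReal.ofReal (2 * r) := by
        rw [← ENNReal.ofReal_add (Real.exp_pos _).le (Real.exp_pos _).le, two_mul]
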